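/- Let A and A+ΔA be real m×n matrices, both of rank n, with leverage scores ℓ_j and ℓ̃_j respectively, and let θ₁ ≤ ⋯ ≤ θ_n be the principal angles between range(A) and range(A+ΔA). Then for each j, |ℓ̃_j − ℓ_j| ≤ 2√(ℓ_j(1−ℓ_j)) cos θ₁ sin θ_n + (sin θ_n)². -/

import Mathlib

open Matrix

/-- Spectral (two-)norm of a real rectangular matrix. -/
noncomputable def spec {m n : ℕ} (A : Matrix (Fin m) (Fin n) ℝ) : ℝ :=
  ‖LinearMap.toContinuousLinearMap (Matrix.toEuclideanLin A)‖

/-- Frobenius norm. -/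
noncomputable def frob {m n : ℕ} (A : Matrix (Fin m) (Fin n) ℝ) : ℝ :=
  Real.sqrt (∑ i, ∑ j, (A i j) ^ 2)

/-- Leverage score: squared Euclidean norm of the j-th row. -/
noncomputable def lev {m n : ℕ} (Q : Matrix (Fin m) (Fin n) ℝ) (j : Fin m) : ℝ :=
  ∑ k, (Q j k) ^ 2

/-- Euclidean norm of the j-th row. -/
noncomputable def rnorm {m n : ℕ} (A : Matrix (Fin m) (Fin n) ℝ) (j : Fin m) : ℝ :=
  Real.sqrt (∑ k, (A j k) ^ 2)

/-- Moore–Penrose inverse of a full column rank matrix. -/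
noncomputable def pinv {m n : ℕ} (A : Matrix (Fin m) (Fin n) ℝ) : Matrix (Fin n) (Fin m) ℝ :=
  (Aᵀ * A)⁻¹ * Aᵀ

private lemma dot_cs {k : ℕ} (x y : Fin k → ℝ) : (x ⬝ᵥ y)^2 ≤ (x ⬝ᵥ x) * (y ⬝ᵥ y) := by
  have := Finset.sum_mul_sq_le_sq_mul_sq Finset.univ x y
  simpa [dotProduct, sq, mul_comm] using this

private lemma dot_tr {k l : ℕ} (U : Matrix (Fin k) (Fin l) ℝ) (w : Fin k → ℝ) (x : Fin l → ℝ) :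
    (w ᵥ* U) ⬝ᵥ x = w ⬝ᵥ (x ᵥ* Uᵀ) := by
  rw [vecMul_transpose, dotProduct_mulVec]

private lemma qf_eq {k : ℕ} (U : Matrix (Fin k) (Fin k) ℝ) (d : Fin k → ℝ) (x : Fin k → ℝ) :
    (x ᵥ* (U * Matrix.diagonal d * Uᵀ)) ⬝ᵥ x = ∑ i, d i * ((x ᵥ* U) i)^2 := by
  rw [← Matrix.vecMul_vecMul, ← Matrix.vecMul_vecMul, dot_tr, transpose_transpose]
  simp [dotProduct, Matrix.vecMul_diagonal]
  exact Finset.sum_congr rfl fun i _ => by ring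

private lemma orth_dot {k l : ℕ} (U : Matrix (Fin k) (Fin l) ℝ) (hU : U * Uᵀ = 1)
    (x y : Fin k → ℝ) : (x ᵥ* U) ⬝ᵥ (y ᵥ* U) = x ⬝ᵥ y := by
  rw [show y ᵥ* U = Uᵀ *ᵥ y from (mulVec_transpose U y).symm, dotProduct_mulVec,
    vecMul_vecMul, hU, vecMul_one]

private lemma dot_self_nonneg {k : ℕ} (x : Fin k → ℝ) : 0 ≤ x ⬝ᵥ x :=
  Finset.sum_nonneg fun i _ => mul_self_nonneg _

private lemma dot_eq_sum_sq {k : ℕ} (x : Fin k → ℝ) : x ⬝ᵥ x = ∑ i, x i ^ 2 := by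
  simp [dotProduct, sq]

private lemma sum_mul_le {k : ℕ} (d y : Fin k → ℝ) (dm : ℝ) (h : ∀ i, d i ≤ dm) :
    ∑ i, d i * y i ^ 2 ≤ dm * ∑ i, y i ^ 2 := by
  rw [Finset.mul_sum]
  exact Finset.sum_le_sum fun i _ => mul_le_mul_of_nonneg_right (h i) (sq_nonneg _)

private lemma sum_mul_ge {k : ℕ} (d y : Fin k → ℝ) (dm : ℝ) (h : ∀ i, dm ≤ d i) :
    dm * ∑ i, y i ^ 2 ≤ ∑ i, d i * y i ^ 2 := by
  rw [Finset.mul_sum]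
  exact Finset.sum_le_sum fun i _ => mul_le_mul_of_nonneg_right (h i) (sq_nonneg _)

private lemma dot_self_vecMul {k l : ℕ} (C : Matrix (Fin k) (Fin l) ℝ) (x : Fin k → ℝ) :
    (x ᵥ* C) ⬝ᵥ (x ᵥ* C) = (x ᵥ* (C * Cᵀ)) ⬝ᵥ x := by
  rw [← Matrix.vecMul_vecMul, dot_tr]
  exact dotProduct_comm _ _

set_option maxHeartbeats 1000000 in
theorem stmt5 {m n : ℕ} (hn : 0 < n)
    (A ΔA : Matrix (Fin m) (Fin n) ℝ)
    (hA : A.rank = n) (hAD : (A + ΔA).rank = n)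
    (Q Qt : Matrix (Fin m) (Fin n) ℝ)
    (hQ : Qᵀ * Q = 1) (hQt : Qtᵀ * Qt = 1)
    (hrQ : LinearMap.range Q.mulVecLin = LinearMap.range A.mulVecLin)
    (hrQt : LinearMap.range Qt.mulVecLin = LinearMap.range (A + ΔA).mulVecLin)
    (U V : Matrix (Fin n) (Fin n) ℝ) (θ : Fin n → ℝ)
    (hU1 : Uᵀ * U = 1) (hU2 : U * Uᵀ = 1) (hV1 : Vᵀ * V = 1) (hV2 : V * Vᵀ = 1)
    (hθ0 : ∀ i, 0 ≤ θ i) (hθ1 : ∀ i, θ i ≤ Real.pi / 2) (hmono : Monotone θ)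
    (hsvd : Qᵀ * Qt = U * (Matrix.diagonal fun i => Real.cos (θ i)) * Vᵀ) :
    ∀ j, |lev Qt j - lev Q j| ≤
      2 * Real.sqrt (lev Q j * (1 - lev Q j)) * Real.cos (θ ⟨0, hn⟩)
        * Real.sin (θ ⟨n - 1, by omega⟩)
      + Real.sin (θ ⟨n - 1, by omega⟩) ^ 2 := by
  intro j
  have hpi := Real.pi_pos
  set i0 : Fin n := ⟨0, hn⟩ with hi0
  set il : Fin n := ⟨n - 1, by omega⟩ with hil
  set co : ℝ := Real.cos (θ i0) with hco
  set s : ℝ := Real.sin (θ il) with hs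
  set D : Matrix (Fin n) (Fin n) ℝ := Matrix.diagonal (fun i => Real.cos (θ i)) with hD
  set C : Matrix (Fin n) (Fin n) ℝ := Qᵀ * Qt with hC
  set e : Fin m → ℝ := Pi.single j 1 with he
  set a : Fin n → ℝ := e ᵥ* Q with ha
  set r : Fin n → ℝ := e ᵥ* Qt with hr
  set c : Fin n → ℝ := a ᵥ* C with hc
  set b : Fin n → ℝ := r - c with hb
  set M : Matrix (Fin m) (Fin n) ℝ := Qt - Q * C with hM
  set p : Fin m → ℝ := e - a ᵥ* Qᵀ with hp
  -- basic angle facts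
  have hcos0 : ∀ i, 0 ≤ Real.cos (θ i) := fun i =>
    Real.cos_nonneg_of_mem_Icc ⟨by linarith [hθ0 i], hθ1 i⟩
  have hsin0 : 0 ≤ s := Real.sin_nonneg_of_nonneg_of_le_pi (hθ0 il) (by linarith [hθ1 il])
  have hco0 : 0 ≤ co := hcos0 i0
  have hco1 : co ≤ 1 := Real.cos_le_one _
  have hcosmax : ∀ i, Real.cos (θ i) ≤ co :=
    fun i => Real.cos_le_cos_of_nonneg_of_le_pi (hθ0 i0) (by linarith [hθ1 i])
      (hmono (show i0 ≤ i by rw [Fin.le_def]; exact Nat.zero_le _))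
  have hcosmin : ∀ i, Real.cos (θ il) ≤ Real.cos (θ i) :=
    fun i => Real.cos_le_cos_of_nonneg_of_le_pi (hθ0 i) (by linarith [hθ1 il])
      (hmono (show i ≤ il by rw [Fin.le_def]; simp [hil]; omega))
  have hcos2max : ∀ i, Real.cos (θ i) ^ 2 ≤ co ^ 2 :=
    fun i => pow_le_pow_left₀ (hcos0 i) (hcosmax i) 2
  have hsin2max : ∀ i, Real.sin (θ i) ^ 2 ≤ s ^ 2 := by
    intro i
    rw [hs, Real.sin_sq, Real.sin_sq]
    have := pow_le_pow_left₀ (hcos0 il) (hcosmin i) 2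
    linarith
  have hcos2min : ∀ i, 1 - s ^ 2 ≤ Real.cos (θ i) ^ 2 := by
    intro i
    have := hsin2max i
    rw [Real.sin_sq] at this
    linarith
  -- leverage scores as dot products
  have haQ : a = fun k => Q j k := by
    funext k; simp [ha, he, single_vecMul]
  have hrQt' : r = fun k => Qt j k := by
    funext k; simp [hr, he, single_vecMul]
  have hlevQ : lev Q j = a ⬝ᵥ a := by
    rw [haQ]; simp [lev, dotProduct, sq]
  have hlevQt : lev Qt j = r ⬝ᵥ r := by
    rw [hrQt']; simp [lev, dotProduct, sq]
  set L : ℝ := a ⬝ᵥ a with hL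
  have hL0 : 0 ≤ L := dot_self_nonneg a
  -- SVD of C
  have hCsvd : C = U * D * Vᵀ := hsvd
  have hQtQ : Qtᵀ * Q = Cᵀ := by rw [hC, transpose_mul, transpose_transpose]
  have hQM : Qᵀ * M = 0 := by
    rw [hM, Matrix.mul_sub, ← Matrix.mul_assoc, hQ, one_mul, ← hC, sub_self]
  -- C * Cᵀ
  have hCCt : C * Cᵀ = U * Matrix.diagonal (fun i => Real.cos (θ i) ^ 2) * Uᵀ := by
    have h1 : C * Cᵀ = U * D * (Vᵀ * V) * D * Uᵀ := by
      rw [hCsvd, transpose_mul, transpose_mul, transpose_transpose, hD, diagonal_transpose, ← hD]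
      simp only [Matrix.mul_assoc]
    rw [h1, hV1, mul_one, Matrix.mul_assoc U D D, hD, diagonal_mul_diagonal]
    congr 2
    funext i; ring
  -- Cᵀ * C and Mᵀ * M
  have hCtC : Cᵀ * C = V * Matrix.diagonal (fun i => Real.cos (θ i) ^ 2) * Vᵀ := by
    have h1 : Cᵀ * C = V * D * (Uᵀ * U) * D * Vᵀ := by
      rw [hCsvd, transpose_mul, transpose_mul, transpose_transpose, hD, diagonal_transpose, ← hD]
      simp only [Matrix.mul_assoc]
    rw [h1, hU1, mul_one, Matrix.mul_assoc V D D, hD, diagonal_mul_diagonal]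
    congr 2
    funext i; ring
  have hMM : Mᵀ * M = V * Matrix.diagonal (fun i => Real.sin (θ i) ^ 2) * Vᵀ := by
    have h1 : Mᵀ * M = 1 - Cᵀ * C := by
      have e1 : Qtᵀ * (Q * C) = Cᵀ * C := by rw [← Matrix.mul_assoc, hQtQ]
      have e2 : Cᵀ * Qᵀ * Qt = Cᵀ * C := by rw [Matrix.mul_assoc, ← hC]
      have e3 : Cᵀ * Qᵀ * (Q * C) = Cᵀ * C := by
        rw [Matrix.mul_assoc Cᵀ, ← Matrix.mul_assoc Qᵀ, hQ, one_mul]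
      rw [hM, transpose_sub, transpose_mul, Matrix.sub_mul, Matrix.mul_sub, Matrix.mul_sub,
        hQt, e1, e2, e3]
      abel
    have hdiag : Matrix.diagonal (fun i => Real.sin (θ i) ^ 2)
        = 1 - Matrix.diagonal (fun i => Real.cos (θ i) ^ 2) := by
      have hfun : (fun i => Real.sin (θ i) ^ 2) = (fun i => 1 - Real.cos (θ i) ^ 2) := by
        funext i; rw [Real.sin_sq]
      rw [hfun, ← Matrix.diagonal_one, diagonal_sub]
    rw [h1, hCtC, hdiag, Matrix.mul_sub, Matrix.mul_one, Matrix.sub_mul, hV2]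
  -- b as a row of M
  have hbM : b = e ᵥ* M := by
    rw [hb, hM, vecMul_sub, hr, hc, ha, vecMul_vecMul]
  have hpM : p ᵥ* M = b := by
    rw [hp, sub_vecMul, vecMul_vecMul, hQM, vecMul_zero, sub_zero, hbM]
  -- p ⬝ᵥ p = 1 - L
  have hQQt : Qᵀ * (Qᵀ)ᵀ = 1 := by rw [transpose_transpose]; exact hQ
  have hpp : p ⬝ᵥ p = 1 - L := by
    have hee : e ⬝ᵥ e = 1 := by rw [he, single_dotProduct]; simp [Pi.single_apply]
    have heq : e ⬝ᵥ (a ᵥ* Qᵀ) = L := by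
      rw [he, single_dotProduct, one_mul]
      rw [hL, haQ]
      simp [Matrix.vecMul, dotProduct]
    have hqq : (a ᵥ* Qᵀ) ⬝ᵥ (a ᵥ* Qᵀ) = L := orth_dot Qᵀ hQQt a a
    have heq2 : (a ᵥ* Qᵀ) ⬝ᵥ e = L := by rw [dotProduct_comm]; exact heq
    rw [hp, sub_dotProduct, dotProduct_sub, dotProduct_sub, hee, heq, hqq, heq2]
    ring
  have hL1 : L ≤ 1 := by
    have := dot_self_nonneg p
    rw [hpp] at this; linarith
  -- decomposition of lev Qt
  have hrcb : r = c + b := by rw [hb]; abel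
  have hlev2 : lev Qt j = c ⬝ᵥ c + 2 * (c ⬝ᵥ b) + b ⬝ᵥ b := by
    rw [hlevQt, hrcb, add_dotProduct, dotProduct_add, dotProduct_add, dotProduct_comm b c]
    ring
  -- bound on c ⬝ᵥ c
  have hcc : c ⬝ᵥ c = ∑ i, Real.cos (θ i) ^ 2 * ((a ᵥ* U) i) ^ 2 := by
    rw [hc, dot_self_vecMul, hCCt, qf_eq]
  have huu : ∑ i, ((a ᵥ* U) i) ^ 2 = L := by
    rw [← dot_eq_sum_sq, orth_dot U hU2 a a]
  have hccle : c ⬝ᵥ c ≤ co ^ 2 * L := by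
    rw [hcc, ← huu]
    exact sum_mul_le _ _ _ hcos2max
  have hccge : (1 - s ^ 2) * L ≤ c ⬝ᵥ c := by
    rw [hcc, ← huu]
    exact sum_mul_ge _ _ _ hcos2min
  have hcc0 : 0 ≤ c ⬝ᵥ c := dot_self_nonneg c
  -- bound on b ⬝ᵥ b
  have hbb0 : 0 ≤ b ⬝ᵥ b := dot_self_nonneg b
  have hvv : ∑ i, ((b ᵥ* V) i) ^ 2 = b ⬝ᵥ b := by
    rw [← dot_eq_sum_sq, orth_dot V hV2 b b]
  have hMb : (M *ᵥ b) ⬝ᵥ (M *ᵥ b) = ∑ i, Real.sin (θ i) ^ 2 * ((b ᵥ* V) i) ^ 2 := by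
    rw [dotProduct_mulVec, show M *ᵥ b = b ᵥ* Mᵀ from (vecMul_transpose M b).symm,
      vecMul_vecMul, hMM, qf_eq]
  have hMble : (M *ᵥ b) ⬝ᵥ (M *ᵥ b) ≤ s ^ 2 * (b ⬝ᵥ b) := by
    rw [hMb, ← hvv]
    exact sum_mul_le _ _ _ hsin2max
  have hpMb : p ⬝ᵥ (M *ᵥ b) = b ⬝ᵥ b := by
    rw [dotProduct_mulVec, hpM]
  have hbb : b ⬝ᵥ b ≤ s ^ 2 * (1 - L) := by
    have hcs := dot_cs p (M *ᵥ b)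
    rw [hpMb, hpp] at hcs
    have h2 : (b ⬝ᵥ b) ^ 2 ≤ (1 - L) * (s ^ 2 * (b ⬝ᵥ b)) := by
      calc (b ⬝ᵥ b) ^ 2 ≤ (1 - L) * ((M *ᵥ b) ⬝ᵥ (M *ᵥ b)) := hcs
      _ ≤ (1 - L) * (s ^ 2 * (b ⬝ᵥ b)) :=
          mul_le_mul_of_nonneg_left hMble (sub_nonneg.mpr hL1)
    rcases eq_or_lt_of_le hbb0 with h | h
    · rw [← h]; exact mul_nonneg (sq_nonneg _) (sub_nonneg.mpr hL1)
    · have h3 : (b ⬝ᵥ b) * (b ⬝ᵥ b) ≤ (s ^ 2 * (1 - L)) * (b ⬝ᵥ b) := by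
        calc (b ⬝ᵥ b) * (b ⬝ᵥ b) = (b ⬝ᵥ b) ^ 2 := (sq _).symm
        _ ≤ (1 - L) * (s ^ 2 * (b ⬝ᵥ b)) := h2
        _ = (s ^ 2 * (1 - L)) * (b ⬝ᵥ b) := by ring
      exact le_of_mul_le_mul_right h3 h
  -- bound on the cross term
  set K : ℝ := Real.sqrt (L * (1 - L)) with hK
  have hK0 : 0 ≤ K := Real.sqrt_nonneg _
  have hK2 : K ^ 2 = L * (1 - L) := Real.sq_sqrt (mul_nonneg hL0 (sub_nonneg.mpr hL1))
  have hcb : |c ⬝ᵥ b| ≤ co * s * K := by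
    have h1 : (c ⬝ᵥ b) ^ 2 ≤ (c ⬝ᵥ c) * (b ⬝ᵥ b) := dot_cs c b
    have h2 : (c ⬝ᵥ c) * (b ⬝ᵥ b) ≤ (co ^ 2 * L) * (s ^ 2 * (1 - L)) :=
      mul_le_mul hccle hbb hbb0 (mul_nonneg (sq_nonneg _) hL0)
    have h3 : (co ^ 2 * L) * (s ^ 2 * (1 - L)) = (co * s * K) ^ 2 := by
      rw [mul_pow, mul_pow, hK2]; ring
    have h4 : (c ⬝ᵥ b) ^ 2 ≤ (co * s * K) ^ 2 := le_trans h1 (le_trans h2 (le_of_eq h3))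
    calc |c ⬝ᵥ b| = Real.sqrt ((c ⬝ᵥ b) ^ 2) := (Real.sqrt_sq_eq_abs _).symm
    _ ≤ Real.sqrt ((co * s * K) ^ 2) := Real.sqrt_le_sqrt h4
    _ = co * s * K := Real.sqrt_sq (mul_nonneg (mul_nonneg hco0 hsin0) hK0)
  -- finish
  rw [hlev2, hlevQ, ← hK]
  have hcb1 : c ⬝ᵥ b ≤ co * s * K := le_trans (le_abs_self _) hcb
  have hcb2 : -(co * s * K) ≤ c ⬝ᵥ b := neg_le_of_abs_le hcb
  have hco2 : co ^ 2 ≤ 1 := pow_le_one₀ hco0 hco1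
  have hccL : c ⬝ᵥ c ≤ L := by
    refine le_trans hccle ?_
    have := mul_le_mul_of_nonneg_right hco2 hL0
    simpa using this
  have hs2L2 : s ^ 2 * (1 - L) ≤ s ^ 2 := by
    have := mul_le_mul_of_nonneg_left (show (1 : ℝ) - L ≤ 1 by linarith) (sq_nonneg s)
    simpa using this
  have hs2L3 : s ^ 2 * L ≤ s ^ 2 := by
    have := mul_le_mul_of_nonneg_left hL1 (sq_nonneg s)
    simpa using this
  have hccge' : L - s ^ 2 * L ≤ c ⬝ᵥ c := by
    have : (1 - s ^ 2) * L = L - s ^ 2 * L := by ring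
    linarith [hccge, this.symm.le, this.le]
  rw [abs_le]
  constructor
  · linarith
  · linarith
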